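/- There exists β_i ∈ Z_p ∖ {0, 1, …, Δ+1, α_{i−1}} such that: for each e_j ∈ M_2, (e_j − β_i) divides J(e_j) but (e_j − β_i)² does not divide J(e_j); for each e_j ∈ M_2, (e_j − β_i) divides G' but (e_j − β_i)² does not divide G'; and (e_i − β_i) divides neither J(e_i) nor G'. -/

import Mathlib

open MvPolynomial
open scoped Classical

noncomputable section

/-- Exponent reduction implementing Fermat's relation `x^p ≡ x`:
`0 ↦ 0` and `k ↦ ((k-1) mod (p-1)) + 1` for `k ≥ 1`. -/
def fermatExp (p k : ℕ) : ℕ := if k = 0 then 0 else (k - 1) % (p - 1) + 1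

lemma fermatExp_zero (p : ℕ) : fermatExp p 0 = 0 := by simp [fermatExp]

/-- The Fermat reduction `F'` of a multivariate polynomial over `Z_p`: every exponent is
reduced using `x^p ≡ x`, so that the result has degree `≤ p-1` in each variable. -/
def fermatReduce {σ : Type*} (p : ℕ) (F : MvPolynomial σ (ZMod p)) : MvPolynomial σ (ZMod p) :=
  F.support.sum fun d => monomial (d.mapRange (fermatExp p) (fermatExp_zero p)) (F.coeff d)

/-- Univariate Fermat reduction. -/
def fermatReduceUni (p : ℕ) (f : Polynomial (ZMod p)) : Polynomial (ZMod p) :=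
  f.support.sum fun k => Polynomial.monomial (fermatExp p k) (f.coeff k)

/-- `N_e(v_i)`: the edges incident to the vertex `i`. -/
def incidentE {n m : ℕ} (ed : Fin m → Sym2 (Fin n)) (i : Fin n) : Finset (Fin m) :=
  Finset.univ.filter fun k => i ∈ ed k

/-- `N_i(v_i)`: the neighbours of `v_i` other than `v_1, …, v_{i-1}`. -/
def laterNbrs {n m : ℕ} (ed : Fin m → Sym2 (Fin n)) (i : Fin n) : Finset (Fin n) :=
  Finset.univ.filter fun j => (∃ k, ed k = s(i, j)) ∧ ¬ j < i

/-- `N_i(e_i)`: the edges sharing an endpoint with `e_i`, other than `e_1, …, e_{i-1}`. -/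
def laterAdjE {n m : ℕ} (ed : Fin m → Sym2 (Fin n)) (k : Fin m) : Finset (Fin m) :=
  Finset.univ.filter fun l => (l ≠ k ∧ ∃ x, x ∈ ed k ∧ x ∈ ed l) ∧ ¬ l < k

/-- The polynomial `P` (vertex variables are `Sum.inl`, edge variables are `Sum.inr`). -/
def Ppoly (n m Δ p : ℕ) (ed : Fin m → Sym2 (Fin n)) : MvPolynomial (Fin n ⊕ Fin m) (ZMod p) :=
  ∏ i : Fin n,
    ((∏ j ∈ laterNbrs ed i, (X (Sum.inl i) - X (Sum.inl j))) *
      (∏ k ∈ incidentE ed i, (X (Sum.inl i) - X (Sum.inr k))) *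
      (∏ l ∈ Finset.Icc (Δ + 2) p, (X (Sum.inl i) - C (l : ZMod p))))

/-- The coefficient of the vertex-monomial `∏ v_j ^ (d j)` of `F`, as a polynomial in the
edge variables. -/
def vCoeff {n m p : ℕ} (F : MvPolynomial (Fin n ⊕ Fin m) (ZMod p)) (d : Fin n →₀ ℕ) :
    MvPolynomial (Fin m) (ZMod p) :=
  ((sumAlgEquiv (ZMod p) (Fin n) (Fin m)) F).coeff d

/-- The colour set `K = {1, …, Δ+1} ∪ {α} ⊆ Z_p`. -/
def colorSet (Δ p : ℕ) (α : ZMod p) : Finset (ZMod p) :=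
  insert α ((Finset.Icc 1 (Δ + 1)).image fun l : ℕ => (l : ZMod p))

/-- The polynomial `E^k`. -/
def Epoly {n m : ℕ} (Δ p : ℕ) [NeZero p] (ed : Fin m → Sym2 (Fin n)) (α : ZMod p) (k : Fin m) :
    MvPolynomial (Fin m) (ZMod p) :=
  (∏ l ∈ laterAdjE ed k, (X k - X l)) *
    (∏ c ∈ Finset.univ \ colorSet Δ p α, (X k - C c))

/-- `Q_i = C^{P'} · E^1 ⋯ E^i`; here `i` is the number of edge factors, so `Qpoly … i`
is the paper's `Q_i` (and `Qpoly … 0 = C^{P'}`). -/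
def Qpoly {n m : ℕ} (Δ p : ℕ) [NeZero p] (ed : Fin m → Sym2 (Fin n)) (α : ZMod p)
    (CP : MvPolynomial (Fin m) (ZMod p)) (i : ℕ) : MvPolynomial (Fin m) (ZMod p) :=
  CP * ∏ k ∈ Finset.univ.filter (fun k : Fin m => (k : ℕ) < i), Epoly Δ p ed α k

/-- Fermat reduction in all variables except the variable `j`. -/
def fermatReduceExcept {m : ℕ} (p : ℕ) (j : Fin m) (F : MvPolynomial (Fin m) (ZMod p)) :
    MvPolynomial (Fin m) (ZMod p) :=
  F.support.sum fun d =>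
    monomial (Finsupp.filter (fun k => k = j) d +
      Finsupp.mapRange (fermatExp p) (fermatExp_zero p) (Finsupp.filter (fun k => k ≠ j) d))
      (F.coeff d)

/-- Given an exponent vector `d0` for the variables other than `j`, the coefficient in `F` of the
monomial `∏_{k ≠ j} X_k ^ (d0 k)`, as a univariate polynomial in the variable `j`. -/
def coeffAt {m p : ℕ} (j : Fin m) (d0 : Fin m →₀ ℕ) (F : MvPolynomial (Fin m) (ZMod p)) :
    Polynomial (ZMod p) :=
  (F.support.filter fun d => ∀ k, k ≠ j → d k = d0 k).sum fun d =>
    Polynomial.monomial (d j) (F.coeff d)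


/-! ### Auxiliary lemmas -/

section AuxLemmas

lemma fermatExp_le_self (p k : ℕ) : fermatExp p k ≤ k := by
  unfold fermatExp
  split
  · omega
  · have := Nat.mod_le (k-1) (p-1); omega

lemma fermatExp_le (p k : ℕ) (hp : 2 ≤ p) : fermatExp p k ≤ p - 1 := by
  unfold fermatExp
  split
  · omega
  · have : (k-1) % (p-1) < p - 1 := Nat.mod_lt _ (by omega)
    omega

lemma pow_fermatExp {p : ℕ} [Fact p.Prime] (x : ZMod p) (k : ℕ) :
    x ^ fermatExp p k = x ^ k := by
  unfold fermatExp
  split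
  · simp_all
  · rename_i hk
    rcases eq_or_ne x 0 with rfl | hx
    · rw [zero_pow (by omega), zero_pow hk]
    · have hx1 : x ^ (p - 1) = 1 := ZMod.pow_card_sub_one_eq_one hx
      have key : x ^ ((k-1) % (p - 1)) = x ^ (k-1) := by
        conv_rhs => rw [← Nat.div_add_mod (k-1) (p-1)]
        rw [pow_add, pow_mul, hx1, one_pow, one_mul]
      calc x ^ ((k-1) % (p-1) + 1) = x ^ ((k-1) % (p-1)) * x := by rw [pow_succ]
        _ = x ^ (k-1) * x := by rw [key]
        _ = x ^ (k - 1 + 1) := by rw [pow_succ]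
        _ = x ^ k := by congr 1; omega

lemma eval_monomial_congr {σ : Type*} [Fintype σ] {p : ℕ} (x : σ → ZMod p)
    (d1 d2 : σ →₀ ℕ) (h : ∀ k, x k ^ d1 k = x k ^ d2 k) (c : ZMod p) :
    eval x (monomial d1 c) = eval x (monomial d2 c) := by
  rw [eval_monomial, eval_monomial,
    Finsupp.prod_fintype _ _ (fun _ => pow_zero _),
    Finsupp.prod_fintype _ _ (fun _ => pow_zero _)]
  congr 1
  exact Finset.prod_congr rfl fun k _ => h k

lemma eval_fermatReduce {σ : Type*} [Fintype σ] {p : ℕ} [Fact p.Prime] (x : σ → ZMod p)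
    (F : MvPolynomial σ (ZMod p)) :
    eval x (fermatReduce p F) = eval x F := by
  unfold fermatReduce
  rw [map_sum]
  conv_rhs => rw [F.as_sum, map_sum]
  refine Finset.sum_congr rfl fun d _ => eval_monomial_congr x _ d (fun k => ?_) _
  rw [Finsupp.mapRange_apply, pow_fermatExp]

lemma fermatReduce_support_le {σ : Type*} {p : ℕ} (F : MvPolynomial σ (ZMod p))
    (d : σ →₀ ℕ) (hd : d ∈ (fermatReduce p F).support) (k : σ) :
    ∃ d' ∈ F.support, d k = fermatExp p (d' k) := by
  classical
  unfold fermatReduce at hd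
  have h2 := MvPolynomial.support_sum hd
  simp only [Finset.mem_biUnion] at h2
  obtain ⟨d', hd', hmem⟩ := h2
  rw [MvPolynomial.support_monomial] at hmem
  split at hmem
  · simp at hmem
  · rw [Finset.mem_singleton] at hmem
    subst hmem
    exact ⟨d', hd', by simp [Finsupp.mapRange_apply]⟩

lemma fermatReduceExcept_support {m p : ℕ} (j : Fin m) (F : MvPolynomial (Fin m) (ZMod p))
    (dd : Fin m →₀ ℕ) (hdd : dd ∈ (fermatReduceExcept p j F).support) :
    ∃ d ∈ F.support, dd j = d j ∧ ∀ k, k ≠ j → dd k = fermatExp p (d k) := by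
  classical
  unfold fermatReduceExcept at hdd
  have h2 := MvPolynomial.support_sum hdd
  simp only [Finset.mem_biUnion] at h2
  obtain ⟨d, hd, hmem⟩ := h2
  rw [MvPolynomial.support_monomial] at hmem
  split at hmem
  · simp at hmem
  · rw [Finset.mem_singleton] at hmem
    subst hmem
    refine ⟨d, hd, ?_, ?_⟩
    · simp [Finsupp.filter_apply, Finsupp.mapRange_apply, fermatExp_zero]
    · intro k hk
      simp [Finsupp.filter_apply, Finsupp.mapRange_apply, hk]

lemma eval_fermatReduceExcept {m p : ℕ} [Fact p.Prime] (j : Fin m) (x : Fin m → ZMod p)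
    (F : MvPolynomial (Fin m) (ZMod p)) :
    eval x (fermatReduceExcept p j F) = eval x F := by
  unfold fermatReduceExcept
  rw [map_sum]
  conv_rhs => rw [F.as_sum, map_sum]
  refine Finset.sum_congr rfl fun d _ => eval_monomial_congr x _ d (fun k => ?_) _
  rcases eq_or_ne k j with rfl | hk
  · simp [Finsupp.filter_apply, Finsupp.mapRange_apply, fermatExp_zero]
  · simp [Finsupp.filter_apply, Finsupp.mapRange_apply, hk, pow_fermatExp]

section SubstJ

variable {σ : Type*} {R : Type*} [CommRing R]

/-- Substitute the variable `j` by the constant `b`. -/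
def substJ (j : σ) (b : R) : MvPolynomial σ R →ₐ[R] MvPolynomial σ R :=
  aeval (Function.update X j (C b))

lemma aeval_self_eq_eval (x : σ → R) (F : MvPolynomial σ R) :
    aeval (R := R) x F = eval x F := by
  rw [aeval_def, show algebraMap R R = RingHom.id R from Algebra.algebraMap_self]
  rfl

lemma eval_substJ (j : σ) (b : R) (x : σ → R) (F : MvPolynomial σ R) :
    eval x (substJ j b F) = eval (Function.update x j b) F := by
  classical
  unfold substJ
  rw [← aeval_self_eq_eval, comp_aeval_apply, ← aeval_self_eq_eval]
  have : (fun i => aeval (R := R) x (Function.update X j (C b) i)) = Function.update x j b := by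
    funext k
    by_cases hk : k = j
    · subst hk; simp
    · simp [Function.update_of_ne hk]
  rw [this]

lemma substJ_monomial (j : σ) (b : R) (d : σ →₀ ℕ) (c : R) :
    substJ j b (monomial d c) = monomial (d.erase j) (c * b ^ d j) := by
  classical
  unfold substJ
  rw [aeval_monomial]
  have hsplit := Finsupp.mul_prod_erase' d j
    (fun i k => (Function.update X j (C b) i) ^ k) (fun i => pow_zero _)
  rw [← hsplit]
  have h2 : (Finsupp.erase j d).prod (fun i k => (Function.update X j (C b) i) ^ k)
      = monomial (d.erase j) (1 : R) := by
    rw [monomial_eq, C_1, one_mul]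
    apply Finsupp.prod_congr
    intro i hi
    have : i ≠ j := by
      rw [Finsupp.support_erase] at hi
      exact Finset.ne_of_mem_erase hi
    rw [Function.update_of_ne this]
  simp only [Function.update_self]
  rw [h2, ← C_pow, algebraMap_eq, C_mul_monomial, C_mul_monomial, mul_one]

lemma substJ_eq_sum (j : σ) (b : R) (F : MvPolynomial σ R) :
    substJ j b F = ∑ d ∈ F.support, monomial (d.erase j) (F.coeff d * b ^ d j) := by
  conv_lhs => rw [F.as_sum, map_sum]
  exact Finset.sum_congr rfl fun d _ => substJ_monomial j b d (F.coeff d)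

lemma substJ_support (j : σ) (b : R) (F : MvPolynomial σ R) (e : σ →₀ ℕ)
    (he : e ∈ (substJ j b F).support) : ∃ d ∈ F.support, e = d.erase j := by
  classical
  rw [substJ_eq_sum] at he
  have h2 := MvPolynomial.support_sum he
  simp only [Finset.mem_biUnion] at h2
  obtain ⟨d, hd, hmem⟩ := h2
  rw [MvPolynomial.support_monomial] at hmem
  split at hmem
  · simp at hmem
  · exact ⟨d, hd, Finset.mem_singleton.mp hmem⟩

lemma dvd_sub_substJ (j : σ) (b : R) (F : MvPolynomial σ R) :
    (X j - C b) ∣ F - substJ j b F := by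
  classical
  nth_rewrite 1 [F.as_sum]
  rw [substJ_eq_sum, ← Finset.sum_sub_distrib]
  apply Finset.dvd_sum
  intro d _
  have key : monomial d (F.coeff d) - monomial (d.erase j) (F.coeff d * b ^ d j)
      = monomial (d.erase j) (F.coeff d) * (X j ^ d j - C (b ^ d j)) := by
    rw [mul_sub]
    congr 1
    · rw [show (X j : MvPolynomial σ R) ^ d j = monomial (Finsupp.single j (d j)) 1 from by
        simp [X_pow_eq_monomial]]
      rw [monomial_mul, mul_one, Finsupp.erase_add_single]
    · rw [mul_comm (monomial (Finsupp.erase j d) (F.coeff d)) _, C_mul_monomial,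
        mul_comm (coeff d F) (b ^ d j)]
  rw [key]
  apply Dvd.dvd.mul_left
  rw [C_pow]
  exact sub_dvd_pow_sub_pow _ _ _

lemma substJ_X_self (j : σ) (b : R) : substJ j b (X j - C b) = 0 := by
  unfold substJ
  rw [map_sub, aeval_X, aeval_C, Function.update_self]
  simp

lemma dvd_iff_substJ (j : σ) (b : R) (F : MvPolynomial σ R) :
    (X j - C b) ∣ F ↔ substJ j b F = 0 := by
  constructor
  · rintro ⟨q, rfl⟩
    rw [map_mul, substJ_X_self, zero_mul]
  · intro h
    have := dvd_sub_substJ j b F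
    rwa [h, sub_zero] at this

/-- View a multivariate polynomial as a univariate polynomial in the variable `j`,
with coefficients in the full multivariate polynomial ring. -/
def psiJ (j : σ) : MvPolynomial σ R →ₐ[R] Polynomial (MvPolynomial σ R) :=
  aeval (fun k => if k = j then Polynomial.X else Polynomial.C (X k))

lemma psiJ_X_sub_C (j : σ) (b : R) :
    psiJ j (X j - C b) = Polynomial.X - Polynomial.C (C b) := by
  unfold psiJ
  rw [map_sub, aeval_X, aeval_C, if_pos rfl]
  congr 1

lemma eval_X_psiJ (j : σ) (F : MvPolynomial σ R) :
    Polynomial.eval (X j) (psiJ j F) = F := by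
  have : (Polynomial.evalRingHom (X j : MvPolynomial σ R)).comp
      ((psiJ (R := R) j).toRingHom) = RingHom.id _ := by
    apply MvPolynomial.ringHom_ext
    · intro a
      simp [psiJ]
    · intro k
      by_cases hk : k = j
      · subst hk; simp [psiJ]
      · simp [psiJ, if_neg hk]
  exact RingHom.congr_fun this F

lemma psiJ_ne_zero (j : σ) (F : MvPolynomial σ R) (hF : F ≠ 0) : psiJ j F ≠ 0 := by
  intro h
  apply hF
  rw [← eval_X_psiJ j F, h, Polynomial.eval_zero]

lemma psiJ_monomial (j : σ) (d : σ →₀ ℕ) (c : R) :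
    psiJ j (monomial d c) =
      Polynomial.C (monomial (d.erase j) c) * Polynomial.X ^ d j := by
  classical
  unfold psiJ
  rw [aeval_monomial]
  rw [← Finsupp.mul_prod_erase' d j _ (fun i => pow_zero _)]
  simp only [if_pos rfl]
  have h2 : (Finsupp.erase j d).prod
      (fun i k => (if i = j then Polynomial.X else Polynomial.C (X i)) ^ k)
      = Polynomial.C (monomial (d.erase j) (1 : R)) := by
    rw [monomial_eq, C_1, one_mul]
    rw [Finsupp.prod, Finsupp.prod, map_prod]
    apply Finset.prod_congr rfl
    intro i hi
    have hij : i ≠ j := by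
      rw [Finsupp.support_erase] at hi
      exact Finset.ne_of_mem_erase hi
    rw [if_neg hij, map_pow]
  have halg : (algebraMap R (Polynomial (MvPolynomial σ R))) c = Polynomial.C (C c) := by
    rfl
  rw [h2]
  simp only [if_true]
  rw [halg, mul_comm (Polynomial.X ^ d j) _, ← mul_assoc, ← Polynomial.C_mul,
    C_mul_monomial, mul_one]

lemma natDegree_psiJ_le (j : σ) (F : MvPolynomial σ R) :
    (psiJ j F).natDegree ≤ degreeOf j F := by
  conv_lhs => rw [F.as_sum, map_sum]
  apply Polynomial.natDegree_sum_le_of_forall_le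
  intro d hd
  calc (psiJ j (monomial d (coeff d F))).natDegree
      = (Polynomial.C (monomial (d.erase j) (coeff d F)) * Polynomial.X ^ d j).natDegree := by
        rw [psiJ_monomial]
    _ ≤ d j := Polynomial.natDegree_C_mul_X_pow_le _ _
    _ ≤ degreeOf j F := degreeOf_le_iff.mp le_rfl d hd

end SubstJ

section SumToIter

variable {σ τ R : Type*} [CommSemiring R]

def uInl (u : (σ ⊕ τ) →₀ ℕ) : σ →₀ ℕ :=
  u.comapDomain Sum.inl Sum.inl_injective.injOn

def uInr (u : (σ ⊕ τ) →₀ ℕ) : τ →₀ ℕ :=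
  u.comapDomain Sum.inr Sum.inr_injective.injOn

lemma uInl_add (u v : (σ ⊕ τ) →₀ ℕ) : uInl (u + v) = uInl u + uInl v :=
  Finsupp.comapDomain_add_of_injective Sum.inl_injective u v

lemma uInr_add (u v : (σ ⊕ τ) →₀ ℕ) : uInr (u + v) = uInr u + uInr v :=
  Finsupp.comapDomain_add_of_injective Sum.inr_injective u v

lemma uInl_single_inl (a : σ) (b : ℕ) :
    uInl (Finsupp.single (Sum.inl a : σ ⊕ τ) b) = Finsupp.single a b := by
  unfold uInl
  exact Finsupp.comapDomain_single _ _ _ _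

lemma uInr_single_inr (a : τ) (b : ℕ) :
    uInr (Finsupp.single (Sum.inr a : σ ⊕ τ) b) = Finsupp.single a b := by
  unfold uInr
  exact Finsupp.comapDomain_single _ _ _ _

lemma uInr_single_inl (a : σ) (b : ℕ) : uInr (Finsupp.single (Sum.inl a : σ ⊕ τ) b) = 0 := by
  ext t
  simp [uInr, Finsupp.comapDomain_apply, Finsupp.single_apply]

lemma uInl_single_inr (a : τ) (b : ℕ) : uInl (Finsupp.single (Sum.inr a : σ ⊕ τ) b) = 0 := by
  ext t
  simp [uInl, Finsupp.comapDomain_apply, Finsupp.single_apply]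

lemma uInl_zero : uInl (0 : (σ ⊕ τ) →₀ ℕ) = 0 := by ext t; simp [uInl]
lemma uInr_zero : uInr (0 : (σ ⊕ τ) →₀ ℕ) = 0 := by ext t; simp [uInr]

lemma uInr_apply (u : (σ ⊕ τ) →₀ ℕ) (t : τ) : uInr u t = u (Sum.inr t) := rfl

lemma sumToIter_monomial (u : (σ ⊕ τ) →₀ ℕ) (c : R) :
    sumToIter R σ τ (monomial u c) = monomial (uInl u) (monomial (uInr u) c) := by
  classical
  induction u using Finsupp.induction with
  | zero =>
    rw [uInl_zero, uInr_zero, monomial_zero', monomial_zero', monomial_zero', sumToIter_C]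
  | single_add a b f ha hb ih =>
    rw [monomial_single_add, map_mul, map_pow, ih, uInl_add, uInr_add]
    cases a with
    | inl a' =>
      rw [sumToIter_Xl, uInl_single_inl, uInr_single_inl, zero_add, monomial_single_add]
    | inr a' =>
      rw [sumToIter_Xr, uInl_single_inr, uInr_single_inr, zero_add, ← C_pow,
        C_mul_monomial, ← monomial_single_add]

lemma sumAlgEquiv_eq_sumToIter (F : MvPolynomial (σ ⊕ τ) R) :
    sumAlgEquiv R σ τ F = sumToIter R σ τ F := by
  have : (sumAlgEquiv R σ τ).toRingEquiv.toRingHom = sumToIter R σ τ := by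
    apply MvPolynomial.ringHom_ext
    · intro a
      simp [sumToIter_C]
    · intro x
      cases x <;> simp [sumToIter_Xl, sumToIter_Xr]
  exact RingHom.congr_fun this F

lemma coeff_sumToIter_support (F : MvPolynomial (σ ⊕ τ) R) (d : σ →₀ ℕ) (e : τ →₀ ℕ)
    (he : e ∈ ((sumToIter R σ τ F).coeff d).support) (t : τ) :
    ∃ u ∈ F.support, e t = u (Sum.inr t) := by
  classical
  rw [F.as_sum, map_sum] at he
  rw [MvPolynomial.coeff_sum] at he
  have h2 := MvPolynomial.support_sum he
  simp only [Finset.mem_biUnion] at h2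
  obtain ⟨u, hu, hmem⟩ := h2
  rw [sumToIter_monomial, coeff_monomial] at hmem
  split at hmem
  · rw [MvPolynomial.support_monomial] at hmem
    split at hmem
    · simp at hmem
    · rw [Finset.mem_singleton] at hmem
      subst hmem
      exact ⟨u, hu, (uInr_apply u t).symm⟩
  · simp at hmem

end SumToIter

section CoeffAt

variable {m p : ℕ}

lemma coeffAt_eval [Fact p.Prime] (j : Fin m) (d0 : Fin m →₀ ℕ) (h0 : d0 j = 0)
    (F : MvPolynomial (Fin m) (ZMod p)) (b : ZMod p) :
    Polynomial.eval b (coeffAt j d0 F) = (substJ j b F).coeff d0 := by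
  classical
  unfold coeffAt
  rw [Polynomial.eval_finset_sum]
  rw [substJ_eq_sum, MvPolynomial.coeff_sum]
  rw [Finset.sum_filter]
  apply Finset.sum_congr rfl
  intro d _
  rw [Polynomial.eval_monomial, coeff_monomial]
  by_cases h : ∀ k, k ≠ j → d k = d0 k
  · rw [if_pos h, if_pos]
    ext k
    rcases eq_or_ne k j with rfl | hk
    · simp [h0]
    · simp [Finsupp.erase_ne hk, h k hk]
  · rw [if_neg h, if_neg]
    intro heq
    apply h
    intro k hk
    rw [← heq, Finsupp.erase_ne hk]

lemma natDegree_coeffAt_le (j : Fin m) (d0 : Fin m →₀ ℕ)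
    (F : MvPolynomial (Fin m) (ZMod p)) :
    (coeffAt j d0 F).natDegree ≤ degreeOf j F := by
  unfold coeffAt
  apply Polynomial.natDegree_sum_le_of_forall_le
  intro d hd
  refine le_trans (Polynomial.natDegree_monomial_le _) ?_
  exact degreeOf_le_iff.mp le_rfl d (Finset.mem_filter.mp hd).1

end CoeffAt

section DegreeHelpers

variable {σ : Type*} {R : Type*} [CommRing R] [Nontrivial R]

lemma degreeOf_X_sub_X_le [DecidableEq σ] (k l j : σ) :
    degreeOf j (X k - X l : MvPolynomial σ R) ≤ if k = j ∨ l = j then 1 else 0 := by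
  rw [degreeOf_le_iff]
  intro s hs
  have := MvPolynomial.support_sub σ (X k) (X l) hs
  rw [support_X, support_X, Finset.mem_union, Finset.mem_singleton, Finset.mem_singleton] at this
  rcases this with rfl | rfl <;>
  · rw [Finsupp.single_apply]
    split <;> split <;> simp_all

lemma degreeOf_X_sub_C_le [DecidableEq σ] (k j : σ) (c : R) :
    degreeOf j (X k - C c : MvPolynomial σ R) ≤ if k = j then 1 else 0 := by
  rw [degreeOf_le_iff]
  intro s hs
  have := MvPolynomial.support_sub σ (X k) (C c) hs
  rw [support_X, Finset.mem_union, Finset.mem_singleton] at this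
  rcases this with rfl | hmem
  · rw [Finsupp.single_apply]
  · have h0 : s = 0 := by
      rw [show (C c : MvPolynomial σ R) = monomial 0 c from rfl,
        MvPolynomial.support_monomial] at hmem
      split at hmem
      · simp at hmem
      · exact Finset.mem_singleton.mp hmem
    subst h0
    simp

end DegreeHelpers

section RootCounting

variable {K : Type*} [Field K] [DecidableEq K]

lemma sum_exp_le_natDegree (J : Polynomial K) (hJ : J ≠ 0) (T : Finset K) (e : K → ℕ)
    (hdvd : ∀ t ∈ T, (Polynomial.X - Polynomial.C t) ^ (e t) ∣ J) :
    ∑ t ∈ T, e t ≤ J.natDegree := by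
  have hco : (↑T : Set K).Pairwise
      (Function.onFun IsCoprime fun t => (Polynomial.X - Polynomial.C t) ^ (e t)) := by
    intro t1 _ t2 _ hne
    exact (Polynomial.isCoprime_X_sub_C_of_isUnit_sub
      (isUnit_iff_ne_zero.mpr (sub_ne_zero.mpr hne))).pow
  have hprod := Finset.prod_dvd_of_coprime hco hdvd
  have := Polynomial.natDegree_le_of_dvd hprod hJ
  rwa [Polynomial.natDegree_prod _ _ (fun t _ => pow_ne_zero _ (Polynomial.X_sub_C_ne_zero t)),
    Finset.sum_congr rfl (fun t _ => by
      rw [Polynomial.natDegree_pow, Polynomial.natDegree_X_sub_C, mul_one])] at this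

lemma sum_exp_le_degreeOf {σ : Type*} [DecidableEq σ] {K : Type*} [Field K] [DecidableEq K]
    (F : MvPolynomial σ K) (hF : F ≠ 0) (j : σ) (T : Finset K) (e : K → ℕ)
    (hdvd : ∀ t ∈ T, (X j - C t) ^ (e t) ∣ F) :
    ∑ t ∈ T, e t ≤ degreeOf j F := by
  have hco : (↑T : Set K).Pairwise
      (Function.onFun IsCoprime fun t => (Polynomial.X - Polynomial.C (C t : MvPolynomial σ K)) ^ (e t)) := by
    intro t1 _ t2 _ hne
    refine (Polynomial.isCoprime_X_sub_C_of_isUnit_sub ?_).pow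
    rw [← C_sub]
    exact (isUnit_iff_ne_zero.mpr (sub_ne_zero.mpr hne)).map (C : K →+* MvPolynomial σ K)
  have hdvd' : ∀ t ∈ T,
      (Polynomial.X - Polynomial.C (C t : MvPolynomial σ K)) ^ (e t) ∣ psiJ j F := by
    intro t ht
    have := map_dvd (psiJ (R := K) j) (hdvd t ht)
    rwa [map_pow, psiJ_X_sub_C] at this
  have hprod := Finset.prod_dvd_of_coprime hco hdvd'
  have hne := psiJ_ne_zero j F hF
  have h1 := Polynomial.natDegree_le_of_dvd hprod hne
  rw [Polynomial.natDegree_prod _ _ (fun t _ => pow_ne_zero _ (Polynomial.X_sub_C_ne_zero _)),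
    Finset.sum_congr rfl (fun t _ => by
      rw [Polynomial.natDegree_pow, Polynomial.natDegree_X_sub_C, mul_one])] at h1
  exact h1.trans (natDegree_psiJ_le j F)

end RootCounting


lemma arith_final (m Δ p bad q : ℕ) (hm2 : 2 ≤ m) (hΔ1 : 1 ≤ Δ)
    (hp : m^2*(2*Δ+2) ≤ p)
    (hbad : bad ≤ ((Δ+3)+(2+(m-1))+(2+(m-1))) + q)
    (hq : q + 2*m ≤ 2*m^2) : bad < p := by
  have h1 : 2 + (m-1) = m + 1 := by omega
  rw [h1] at hbad
  nlinarith [hp, hbad, hq, hΔ1, hm2, Nat.mul_le_mul hm2 hm2]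

end AuxLemmas


/-- Claim 3.9 of the paper. In the situation of Hypothesis 3.5 (with
`α = α_{i-1}`), with `G`, `M_1`, `M_2` as in the context and, for each `e_j ∈ M_2 ∪ {e_i}`,
a chosen monomial (exponent vector `d0 j`, not involving `e_j`) whose coefficient
`J(e_j) = coeffAt j (d0 j) (fermatReduceExcept p j G)` is nonzero, there exists
`β_i ∈ Z_p ∖ {0, 1, …, Δ+1, α_{i-1}}` such that: for each `e_j ∈ M_2`, `(e_j - β_i)` divides
`J(e_j)` but `(e_j - β_i)²` does not; for each `e_j ∈ M_2`, `(e_j - β_i)` divides `G'` but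
`(e_j - β_i)²` does not; and `(e_i - β_i)` divides neither `J(e_i)` nor `G'`. -/
theorem statement6 (n m Δ p : ℕ) [Fact p.Prime]
    (hm : 1 ≤ m) (hp : m ^ 2 * (2 * Δ + 2) ≤ p)
    (ed : Fin m → Sym2 (Fin n)) (hinj : Function.Injective ed)
    (hsimple : ∀ k, ¬ (ed k).IsDiag)
    (hΔ : ∀ i, (incidentE ed i).card ≤ Δ)
    (hΔmax : ∃ i, (incidentE ed i).card = Δ)
    (d : Fin n →₀ ℕ) (CP : MvPolynomial (Fin m) (ZMod p))
    (hCP : CP = vCoeff (fermatReduce p (Ppoly n m Δ p ed)) d) (hCP0 : CP ≠ 0)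
    (α : ZMod p) (hα : α ∉ (Finset.range (Δ + 2)).image fun l : ℕ => (l : ZMod p))
    (i : Fin m) (hi : 1 ≤ (i : ℕ))
    (hQprev : fermatReduce p (Qpoly Δ p ed α CP (i : ℕ)) ≠ 0)
    (hQi : fermatReduce p (Qpoly Δ p ed α CP ((i : ℕ) + 1)) = 0)
    (M1 : Finset (Fin m)) (hM1 : ∀ k ∈ M1, k < i)
    (Gp : MvPolynomial (Fin m) (ZMod p))
    (hGp : Gp = Qpoly Δ p ed α CP (i : ℕ) * ∏ k ∈ M1, (X k - C α))
    (M2 : Finset (Fin m)) (hM2 : M2 = (Finset.univ.filter fun k : Fin m => k < i) \ M1)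
    (hG : fermatReduce p Gp ≠ 0)
    (hH : ∀ j ∈ M2, fermatReduce p (fermatReduce p Gp * (X j - C α)) = 0)
    (d0 : Fin m → (Fin m →₀ ℕ))
    (hd0 : ∀ j ∈ insert i M2, (d0 j) j = 0)
    (hJ : ∀ j ∈ insert i M2, coeffAt j (d0 j) (fermatReduceExcept p j Gp) ≠ 0) :
    ∃ β : ZMod p,
      β ∉ insert α ((Finset.range (Δ + 2)).image fun l : ℕ => (l : ZMod p)) ∧
      (∀ j ∈ M2,
        (Polynomial.X - Polynomial.C β) ∣ coeffAt j (d0 j) (fermatReduceExcept p j Gp) ∧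
        ¬ (Polynomial.X - Polynomial.C β) ^ 2 ∣ coeffAt j (d0 j) (fermatReduceExcept p j Gp)) ∧
      (∀ j ∈ M2,
        (X j - C β) ∣ fermatReduce p Gp ∧ ¬ (X j - C β) ^ 2 ∣ fermatReduce p Gp) ∧
      ¬ (Polynomial.X - Polynomial.C β) ∣ coeffAt i (d0 i) (fermatReduceExcept p i Gp) ∧
      ¬ (X i - C β) ∣ fermatReduce p Gp := by
  classical
  have hp2 : 2 ≤ p := (Fact.out : p.Prime).two_le
  have hm2 : 2 ≤ m := by have := i.isLt; omega
  -- Δ ≥ 1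
  have sym2_exists : ∀ z : Sym2 (Fin n), ∃ a b, z = s(a, b) := by
    intro z
    induction z using Sym2.ind with
    | _ a b => exact ⟨a, b, rfl⟩
  have hΔ1 : 1 ≤ Δ := by
    obtain ⟨a, b, hab⟩ := sym2_exists (ed ⟨0, by omega⟩)
    refine le_trans ?_ (hΔ a)
    refine Finset.card_pos.mpr ⟨⟨0, by omega⟩, ?_⟩
    unfold incidentE
    rw [Finset.mem_filter]
    exact ⟨Finset.mem_univ _, by rw [hab]; exact Sym2.mem_mk_left a b⟩
  -- each edge has at most two endpoints
  have hedge : ∀ j : Fin m, (Finset.univ.filter (fun v : Fin n => v ∈ ed j)).card ≤ 2 := by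
    intro j
    obtain ⟨a, b, hab⟩ := sym2_exists (ed j)
    have hsub : (Finset.univ.filter (fun v : Fin n => v ∈ ed j)) ⊆ {a, b} := by
      intro v hv
      rw [Finset.mem_filter, hab, Sym2.mem_iff] at hv
      rcases hv.2 with rfl | rfl <;> simp
    exact le_trans (Finset.card_le_card hsub)
      (le_trans (Finset.card_insert_le _ _) (by simp))
  -- degree of each edge variable in P is at most 2
  have hPdeg : ∀ j : Fin m, degreeOf (Sum.inr j) (Ppoly n m Δ p ed) ≤ 2 := by
    intro j
    unfold Ppoly
    refine le_trans (degreeOf_prod_le _ _ _) ?_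
    have hterm : ∀ v : Fin n,
        degreeOf (Sum.inr j)
          ((∏ w ∈ laterNbrs ed v, (X (Sum.inl v) - X (Sum.inl w))) *
            (∏ k ∈ incidentE ed v, (X (Sum.inl v) - X (Sum.inr k))) *
            (∏ l ∈ Finset.Icc (Δ + 2) p, (X (Sum.inl v) - C (l : ZMod p))))
          ≤ if v ∈ ed j then 1 else 0 := by
      intro v
      have hA : degreeOf (Sum.inr j)
          (∏ w ∈ laterNbrs ed v,
            (X (Sum.inl v) - X (Sum.inl w) : MvPolynomial (Fin n ⊕ Fin m) (ZMod p))) ≤ 0 := by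
        refine le_trans (degreeOf_prod_le _ _ _) ?_
        refine le_trans (Finset.sum_le_sum (fun w _ => degreeOf_X_sub_X_le _ _ _)) ?_
        simp
      have hC : degreeOf (Sum.inr j)
          (∏ l ∈ Finset.Icc (Δ + 2) p,
            (X (Sum.inl v) - C (l : ZMod p) : MvPolynomial (Fin n ⊕ Fin m) (ZMod p))) ≤ 0 := by
        refine le_trans (degreeOf_prod_le _ _ _) ?_
        refine le_trans (Finset.sum_le_sum (fun w _ => degreeOf_X_sub_C_le _ _ _)) ?_
        simp
      have hB : degreeOf (Sum.inr j)
          (∏ k ∈ incidentE ed v,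
            (X (Sum.inl v) - X (Sum.inr k) : MvPolynomial (Fin n ⊕ Fin m) (ZMod p)))
          ≤ if v ∈ ed j then 1 else 0 := by
        refine le_trans (degreeOf_prod_le _ _ _) ?_
        refine le_trans (Finset.sum_le_sum (fun k _ => degreeOf_X_sub_X_le _ _ _)) ?_
        have hre : ∀ k : Fin m,
            (if (Sum.inl v : Fin n ⊕ Fin m) = Sum.inr j ∨ (Sum.inr k : Fin n ⊕ Fin m) = Sum.inr j
              then 1 else 0) = if k = j then (1:ℕ) else 0 := by
          intro k
          simp [Sum.inr.injEq]
        rw [Finset.sum_congr rfl (fun k _ => hre k), Finset.sum_ite_eq' (incidentE ed v) j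
          (fun _ => (1:ℕ))]
        have : j ∈ incidentE ed v ↔ v ∈ ed j := by
          unfold incidentE
          simp
        simp [this]
      calc degreeOf (Sum.inr j) _ ≤ _ := degreeOf_mul_le _ _ _
        _ ≤ (0 + (if v ∈ ed j then 1 else 0)) + 0 := by
            refine Nat.add_le_add (le_trans (degreeOf_mul_le _ _ _) (Nat.add_le_add hA hB)) hC
        _ ≤ if v ∈ ed j then 1 else 0 := by omega
    refine le_trans (Finset.sum_le_sum (fun v _ => hterm v)) ?_
    rw [← Finset.card_filter]
    exact hedge j
  have hCPdeg : ∀ j : Fin m, degreeOf j CP ≤ 2 := by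
    intro j
    rw [hCP, degreeOf_le_iff]
    intro e he
    unfold vCoeff at he
    rw [sumAlgEquiv_eq_sumToIter] at he
    obtain ⟨u, hu, heq⟩ := coeff_sumToIter_support _ d e he j
    obtain ⟨d', hd', hexp⟩ := fermatReduce_support_le _ u hu (Sum.inr j)
    rw [heq, hexp]
    exact le_trans (fermatExp_le_self _ _) (degreeOf_le_iff.mp (hPdeg j) d' hd')
  -- degrees of E polynomials
  have hEne : ∀ (j k : Fin m), k ≠ j → degreeOf j (Epoly Δ p ed α k) ≤ 1 := by
    intro j k hk
    unfold Epoly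
    refine le_trans (degreeOf_mul_le _ _ _) ?_
    have h1 : degreeOf j (∏ l ∈ laterAdjE ed k,
        (X k - X l : MvPolynomial (Fin m) (ZMod p))) ≤ 1 := by
      refine le_trans (degreeOf_prod_le _ _ _) ?_
      refine le_trans (Finset.sum_le_sum (fun l _ => degreeOf_X_sub_X_le k l j)) ?_
      have hre : ∀ l : Fin m, (if k = j ∨ l = j then 1 else 0) = if l = j then (1:ℕ) else 0 := by
        intro l
        simp [hk]
      rw [Finset.sum_congr rfl (fun l _ => hre l),
        Finset.sum_ite_eq' (laterAdjE ed k) j (fun _ => (1:ℕ))]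
      split <;> simp
    have h2 : degreeOf j (∏ c ∈ Finset.univ \ colorSet Δ p α,
        (X k - C c : MvPolynomial (Fin m) (ZMod p))) ≤ 0 := by
      refine le_trans (degreeOf_prod_le _ _ _) ?_
      refine le_trans (Finset.sum_le_sum (fun c _ => degreeOf_X_sub_C_le k j c)) ?_
      simp [hk]
    omega
  have hEself : ∀ j : Fin m, degreeOf j (Epoly Δ p ed α j) ≤ (m - 1) + (p - 1) := by
    intro j
    unfold Epoly
    refine le_trans (degreeOf_mul_le _ _ _) ?_
    have h1 : degreeOf j (∏ l ∈ laterAdjE ed j,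
        (X j - X l : MvPolynomial (Fin m) (ZMod p))) ≤ m - 1 := by
      refine le_trans (degreeOf_prod_le _ _ _) ?_
      refine le_trans (Finset.sum_le_sum (g := fun _ => (1:ℕ)) (fun l _ =>
        le_trans (degreeOf_X_sub_X_le j l j) (by split <;> simp))) ?_
      rw [Finset.sum_const, smul_eq_mul, mul_one]
      have hsub : laterAdjE ed j ⊆ Finset.univ.erase j := by
        intro l hl
        unfold laterAdjE at hl
        rw [Finset.mem_filter] at hl
        exact Finset.mem_erase.mpr ⟨hl.2.1.1, Finset.mem_univ _⟩
      refine le_trans (Finset.card_le_card hsub) ?_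
      rw [Finset.card_erase_of_mem (Finset.mem_univ _), Finset.card_univ, Fintype.card_fin]
    have h2 : degreeOf j (∏ c ∈ Finset.univ \ colorSet Δ p α,
        (X j - C c : MvPolynomial (Fin m) (ZMod p))) ≤ p - 1 := by
      refine le_trans (degreeOf_prod_le _ _ _) ?_
      refine le_trans (Finset.sum_le_sum (g := fun _ => (1:ℕ)) (fun c _ =>
        le_trans (degreeOf_X_sub_C_le j j c) (by split <;> simp))) ?_
      rw [Finset.sum_const, smul_eq_mul, mul_one]
      rw [Finset.card_sdiff_of_subset (Finset.subset_univ _), Finset.card_univ, ZMod.card]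
      have : 1 ≤ (colorSet Δ p α).card := by
        refine Finset.card_pos.mpr ⟨α, ?_⟩
        unfold colorSet
        exact Finset.mem_insert_self _ _
      omega
    exact Nat.add_le_add h1 h2
  -- bound on the degree of Gp in each variable j ∈ M2
  have hM2lt : ∀ j ∈ M2, j < i ∧ j ∉ M1 := by
    intro j hj
    rw [hM2, Finset.mem_sdiff, Finset.mem_filter] at hj
    exact ⟨hj.1.2, hj.2⟩
  have hM1deg : ∀ j : Fin m, j ∉ M1 →
      degreeOf j (∏ k ∈ M1, (X k - C α : MvPolynomial (Fin m) (ZMod p))) ≤ 0 := by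
    intro j hjM1
    refine le_trans (degreeOf_prod_le _ _ _) ?_
    refine le_trans (Finset.sum_le_sum (fun k hk =>
      le_trans (degreeOf_X_sub_C_le k j α) (le_of_eq (if_neg (fun h => hjM1 (by rw [← h]; exact hk)))))) ?_
    simp
  have hGpj : ∀ j ∈ M2, degreeOf j Gp ≤ (2 + (((m - 1) + (p - 1)) + (m - 1))) + 0 := by
    intro j hj
    obtain ⟨hji, hjM1⟩ := hM2lt j hj
    rw [hGp]
    refine le_trans (degreeOf_mul_le _ _ _) (Nat.add_le_add ?_ (hM1deg j hjM1))
    unfold Qpoly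
    refine le_trans (degreeOf_mul_le _ _ _) (Nat.add_le_add (hCPdeg j) ?_)
    refine le_trans (degreeOf_prod_le _ _ _) ?_
    have hterm : ∀ k : Fin m, degreeOf j (Epoly Δ p ed α k)
        ≤ if k = j then ((m - 1) + (p - 1)) else 1 := by
      intro k
      rcases eq_or_ne k j with rfl | hk
      · rw [if_pos rfl]; exact hEself k
      · rw [if_neg hk]; exact hEne j k hk
    refine le_trans (Finset.sum_le_sum (fun k _ => hterm k)) ?_
    refine le_trans (Finset.sum_le_sum_of_subset (Finset.subset_univ _)) ?_
    rw [← Finset.add_sum_erase _ _ (Finset.mem_univ j), if_pos rfl]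
    refine Nat.add_le_add_left ?_ _
    refine le_trans (le_of_eq (Finset.sum_congr rfl
      (fun k hk => if_neg (Finset.ne_of_mem_erase hk)))) ?_
    rw [Finset.sum_const, smul_eq_mul, mul_one,
      Finset.card_erase_of_mem (Finset.mem_univ _), Finset.card_univ, Fintype.card_fin]
  have hiM1 : i ∉ M1 := fun h => lt_irrefl i (hM1 i h)
  have hGpi : degreeOf i Gp ≤ (2 + (m - 1)) + 0 := by
    rw [hGp]
    refine le_trans (degreeOf_mul_le _ _ _) (Nat.add_le_add ?_ (hM1deg i hiM1))
    unfold Qpoly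
    refine le_trans (degreeOf_mul_le _ _ _) (Nat.add_le_add (hCPdeg i) ?_)
    refine le_trans (degreeOf_prod_le _ _ _) ?_
    have hterm : ∀ k ∈ Finset.univ.filter (fun k : Fin m => (k : ℕ) < (i : ℕ)),
        degreeOf i (Epoly Δ p ed α k) ≤ 1 := by
      intro k hk
      rw [Finset.mem_filter] at hk
      exact hEne i k (fun h => by omega)
    refine le_trans (Finset.sum_le_sum hterm) ?_
    rw [Finset.sum_const, smul_eq_mul, mul_one]
    have hsub : Finset.univ.filter (fun k : Fin m => (k : ℕ) < (i : ℕ)) ⊆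
        Finset.univ.erase i := by
      intro k hk
      rw [Finset.mem_filter] at hk
      exact Finset.mem_erase.mpr ⟨fun h => by subst h; omega, Finset.mem_univ _⟩
    refine le_trans (Finset.card_le_card hsub) ?_
    rw [Finset.card_erase_of_mem (Finset.mem_univ _), Finset.card_univ, Fintype.card_fin]
  -- functional facts
  set F := fermatReduce p Gp with hFdef
  have hGpv : ∀ j ∈ M2, ∀ x : Fin m → ZMod p, x j ≠ α → eval x Gp = 0 := by
    intro j hj x hx
    have h0 := congrArg (eval x) (hH j hj)
    rw [eval_fermatReduce, map_mul, map_sub, eval_X, eval_C, map_zero] at h0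
    have h1 : eval x F = 0 ∨ (x j - α) = 0 := mul_eq_zero.mp h0
    have h2 : eval x F = 0 := h1.resolve_right (sub_ne_zero.mpr hx)
    rw [hFdef, eval_fermatReduce] at h2
    exact h2
  have hFv : ∀ j ∈ M2, ∀ x : Fin m → ZMod p, x j ≠ α → eval x F = 0 := by
    intro j hj x hx
    rw [hFdef, eval_fermatReduce]
    exact hGpv j hj x hx
  have hFsupp : ∀ dd ∈ F.support, ∀ k, dd k ≤ p - 1 := by
    intro dd hdd k
    obtain ⟨d', _, heq⟩ := fermatReduce_support_le Gp dd hdd k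
    rw [heq]
    exact fermatExp_le p _ hp2
  have hFGdeg : ∀ k, degreeOf k F ≤ degreeOf k Gp := by
    intro k
    rw [degreeOf_le_iff]
    intro dd hdd
    obtain ⟨d', hd', heq⟩ := fermatReduce_support_le Gp dd hdd k
    rw [heq]
    exact le_trans (fermatExp_le_self _ _) (degreeOf_le_iff.mp le_rfl d' hd')
  -- divisibility of F
  have hsubF : ∀ j ∈ M2, ∀ b : ZMod p, b ≠ α → substJ j b F = 0 := by
    intro j hj b hb
    apply MvPolynomial.eq_zero_of_eval_eq_zero (Fin m) (ZMod p)
    · intro v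
      rw [eval_substJ]
      exact hFv j hj _ (by simp [Function.update_self, hb])
    · rw [MvPolynomial.mem_restrictDegree]
      intro s hs k
      rw [ZMod.card]
      obtain ⟨dd, hdd, rfl⟩ := substJ_support j b F s hs
      rcases eq_or_ne k j with rfl | hk
      · simp
      · rw [Finsupp.erase_ne hk]
        exact hFsupp dd hdd k
  have hdvdF : ∀ j ∈ M2, ∀ b : ZMod p, b ≠ α → (X j - C b) ∣ F := by
    intro j hj b hb
    exact (dvd_iff_substJ j b F).mpr (hsubF j hj b hb)
  have hnsqF : ∀ j ∈ M2, ∀ b : ZMod p, b ≠ α → ¬ ((X j - C b) ^ 2 ∣ F) := by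
    intro j hj b hb hsq
    have hbmem : b ∈ Finset.univ.erase α := Finset.mem_erase.mpr ⟨hb, Finset.mem_univ _⟩
    have hsum := sum_exp_le_degreeOf F hG j (Finset.univ.erase α)
      (fun t => if t = b then 2 else 1) ?_
    · have hcalc : (∑ t ∈ Finset.univ.erase α, if t = b then 2 else 1) = p := by
        rw [← Finset.add_sum_erase _ _ hbmem, if_pos rfl]
        rw [Finset.sum_congr rfl (fun t ht => if_neg (Finset.ne_of_mem_erase ht))]
        rw [Finset.sum_const, smul_eq_mul, mul_one, Finset.card_erase_of_mem hbmem,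
          Finset.card_erase_of_mem (Finset.mem_univ _), Finset.card_univ, ZMod.card]
        omega
      have hdeg := hFsupp
      have h1 : degreeOf j F ≤ p - 1 := by
        rw [degreeOf_le_iff]
        intro dd hdd
        exact hFsupp dd hdd j
      rw [hcalc] at hsum
      omega
    · intro t ht
      rcases eq_or_ne t b with rfl | htb
      · simpa using hsq
      · simp only [if_neg htb, pow_one]
        exact hdvdF j hj t (Finset.mem_erase.mp ht).1
  -- the univariate polynomials J
  set Jf : Fin m → Polynomial (ZMod p) :=
    fun j => coeffAt j (d0 j) (fermatReduceExcept p j Gp) with hJfdef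
  have hJeval : ∀ j ∈ M2, ∀ b : ZMod p, b ≠ α → Polynomial.eval b (Jf j) = 0 := by
    intro j hj b hb
    rw [hJfdef]
    simp only
    rw [coeffAt_eval j (d0 j) (hd0 j (Finset.mem_insert_of_mem hj)) _ b]
    have hzero : substJ j b (fermatReduceExcept p j Gp) = 0 := by
      apply MvPolynomial.eq_zero_of_eval_eq_zero (Fin m) (ZMod p)
      · intro v
        rw [eval_substJ, eval_fermatReduceExcept]
        exact hGpv j hj _ (by simp [Function.update_self, hb])
      · rw [MvPolynomial.mem_restrictDegree]
        intro s hs k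
        rw [ZMod.card]
        obtain ⟨dd, hdd, rfl⟩ := substJ_support j b _ s hs
        rcases eq_or_ne k j with rfl | hk
        · simp
        · rw [Finsupp.erase_ne hk]
          obtain ⟨dorig, _, _, hoth⟩ := fermatReduceExcept_support j Gp dd hdd
          rw [hoth k hk]
          exact fermatExp_le p _ hp2
    rw [hzero]
    simp
  have hJdvd : ∀ j ∈ M2, ∀ b : ZMod p, b ≠ α →
      (Polynomial.X - Polynomial.C b) ∣ Jf j := by
    intro j hj b hb
    exact Polynomial.dvd_iff_isRoot.mpr (hJeval j hj b hb)
  have hJdeg : ∀ j : Fin m, (Jf j).natDegree ≤ degreeOf j Gp := by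
    intro j
    rw [hJfdef]
    refine le_trans (natDegree_coeffAt_le j (d0 j) _) ?_
    rw [degreeOf_le_iff]
    intro dd hdd
    obtain ⟨dorig, hdor, hjc, _⟩ := fermatReduceExcept_support j Gp dd hdd
    rw [hjc]
    exact degreeOf_le_iff.mp le_rfl dorig hdor
  -- the sets of bad values
  set S : Fin m → Finset (ZMod p) := fun j => Finset.univ.filter
    (fun β => β ≠ α ∧ (Polynomial.X - Polynomial.C β) ^ 2 ∣ Jf j) with hSdef
  have hScard : ∀ j ∈ M2, (S j).card ≤ 2 * m := by
    intro j hj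
    have hsum := sum_exp_le_natDegree (Jf j) (hJ j (Finset.mem_insert_of_mem hj))
      (Finset.univ.erase α) (fun t => if t ∈ S j then 2 else 1) ?_
    · have hcalc : (∑ t ∈ Finset.univ.erase α, if t ∈ S j then 2 else 1)
          = (Finset.univ.erase α).card + (S j).card := by
        have hre : ∀ t : ZMod p, (if t ∈ S j then 2 else 1) =
            1 + (if t ∈ S j then 1 else 0) := by
          intro t; split <;> rfl
        rw [Finset.sum_congr rfl (fun t _ => hre t), Finset.sum_add_distrib,
          Finset.sum_const, smul_eq_mul, mul_one, ← Finset.card_filter]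
        congr 1
        congr 1
        ext β
        rw [Finset.mem_filter, Finset.mem_erase]
        constructor
        · exact fun h => h.2
        · intro h
          have := Finset.mem_filter.mp h
          exact ⟨⟨this.2.1, Finset.mem_univ _⟩, h⟩
      have hcard : (Finset.univ.erase α).card = p - 1 := by
        rw [Finset.card_erase_of_mem (Finset.mem_univ _), Finset.card_univ, ZMod.card]
      have h2 := hJdeg j
      have h3 := hGpj j hj
      rw [hcalc, hcard] at hsum
      omega
    · intro t ht
      by_cases hts : t ∈ S j
      · simp only [if_pos hts]
        exact (Finset.mem_filter.mp hts).2.2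
      · simp only [if_neg hts, pow_one]
        exact hJdvd j hj t (Finset.mem_erase.mp ht).1
  set badJ : Finset (ZMod p) := Finset.univ.filter
    (fun β => (Polynomial.X - Polynomial.C β) ∣ Jf i) with hbadJdef
  have hbadJcard : badJ.card ≤ 2 + (m - 1) := by
    have hsum := sum_exp_le_natDegree (Jf i) (hJ i (Finset.mem_insert_self i M2))
      badJ (fun _ => 1) ?_
    · rw [Finset.sum_const, smul_eq_mul, mul_one] at hsum
      exact le_trans hsum (le_trans (hJdeg i) hGpi)
    · intro t ht
      rw [pow_one]
      exact (Finset.mem_filter.mp ht).2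
  set badF : Finset (ZMod p) := Finset.univ.filter (fun β => (X i - C β) ∣ F) with hbadFdef
  have hbadFcard : badF.card ≤ 2 + (m - 1) := by
    have hsum := sum_exp_le_degreeOf F hG i badF (fun _ => 1) ?_
    · rw [Finset.sum_const, smul_eq_mul, mul_one] at hsum
      exact le_trans hsum (le_trans (hFGdeg i) hGpi)
    · intro t ht
      rw [pow_one]
      exact (Finset.mem_filter.mp ht).2
  set Kset : Finset (ZMod p) :=
    insert α ((Finset.range (Δ + 2)).image fun l : ℕ => (l : ZMod p)) with hKdef
  have hKcard : Kset.card ≤ Δ + 3 := by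
    refine le_trans (Finset.card_insert_le _ _) ?_
    have := Finset.card_image_le (s := Finset.range (Δ + 2))
      (f := fun l : ℕ => (l : ZMod p))
    rw [Finset.card_range] at this
    omega
  set bad : Finset (ZMod p) := ((Kset ∪ badJ) ∪ badF) ∪ M2.biUnion S with hbaddef
  have hM2card : M2.card + 1 ≤ m := by
    have hsub : M2 ⊆ Finset.univ.erase i := by
      intro k hk
      obtain ⟨hki, _⟩ := hM2lt k hk
      exact Finset.mem_erase.mpr ⟨ne_of_lt hki, Finset.mem_univ _⟩
    have := Finset.card_le_card hsub
    rw [Finset.card_erase_of_mem (Finset.mem_univ _), Finset.card_univ, Fintype.card_fin] at this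
    omega
  have hbadcard : bad.card ≤ ((Δ + 3) + (2 + (m - 1)) + (2 + (m - 1))) + M2.card * (2 * m) := by
    refine le_trans (Finset.card_union_le _ _) ?_
    refine Nat.add_le_add ?_ ?_
    · refine le_trans (Finset.card_union_le _ _) ?_
      refine Nat.add_le_add ?_ hbadFcard
      refine le_trans (Finset.card_union_le _ _) ?_
      exact Nat.add_le_add hKcard hbadJcard
    · refine le_trans (Finset.card_biUnion_le) ?_
      refine le_trans (Finset.sum_le_sum (fun j hj => hScard j hj)) ?_
      rw [Finset.sum_const, smul_eq_mul]
  have hbadlt : bad.card < p := by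
    have hq : M2.card * (2*m) + 2*m ≤ 2*m^2 := by
      calc M2.card * (2*m) + 2*m = (M2.card + 1) * (2*m) := by ring
        _ ≤ m * (2*m) := Nat.mul_le_mul_right _ hM2card
        _ = 2*m^2 := by ring
    exact arith_final m Δ p bad.card (M2.card * (2*m)) hm2 hΔ1 hp hbadcard hq
  -- choose β
  have hnotsub : ¬ ((Finset.univ : Finset (ZMod p)) ⊆ bad) := by
    intro hsub
    have := Finset.card_le_card hsub
    rw [Finset.card_univ, ZMod.card] at this
    omega
  obtain ⟨β, -, hβ⟩ := Finset.not_subset.mp hnotsub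
  have hβK : β ∉ Kset := fun h => hβ (by
    rw [hbaddef]
    exact Finset.mem_union_left _ (Finset.mem_union_left _ (Finset.mem_union_left _ h)))
  have hβα : β ≠ α := fun h => hβK (by rw [hKdef, h]; exact Finset.mem_insert_self _ _)
  refine ⟨β, hβK, ?_, ?_, ?_, ?_⟩
  · intro j hj
    refine ⟨hJdvd j hj β hβα, ?_⟩
    intro hsq
    apply hβ
    rw [hbaddef]
    refine Finset.mem_union_right _ (Finset.mem_biUnion.mpr ⟨j, hj, ?_⟩)
    rw [hSdef]
    exact Finset.mem_filter.mpr ⟨Finset.mem_univ _, hβα, hsq⟩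
  · intro j hj
    exact ⟨hdvdF j hj β hβα, hnsqF j hj β hβα⟩
  · intro hdvd
    apply hβ
    rw [hbaddef]
    refine Finset.mem_union_left _ (Finset.mem_union_left _ (Finset.mem_union_right _ ?_))
    rw [hbadJdef]
    exact Finset.mem_filter.mpr ⟨Finset.mem_univ _, hdvd⟩
  · intro hdvd
    apply hβ
    rw [hbaddef]
    refine Finset.mem_union_left _ (Finset.mem_union_right _ ?_)
    rw [hbadFdef]
    exact Finset.mem_filter.mpr ⟨Finset.mem_univ _, hdvd⟩


end
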